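/- Let I be a summable ideal given by a weight μ with Σ_{i∈ω} μ(i) = ∞ and μ(i) ≤ 1 for all i, and let f : ω → ω be any function. Then for every A ⊆ ω with Σ_{i∈A} μ(i) = ∞ and every m ∈ ω, there exists a sequence of finite sets ⟨tᵢ : i > m⟩ with tᵢ ⊆ A \ f(i), max(tᵢ) < min(tᵢ₊₁), and 2^i ≤ Σ_{j∈tᵢ} μ(j) < 2^{i+1} + 1, so that B = ⋃_{i>m} tᵢ satisfies Σ_{j∈B} μ(j) = ∞. -/

import Mathlib

open scoped ENNReal

/-- The mass of a set of integers under a weight function. -/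
noncomputable def mass (μ : ℕ → ℝ≥0∞) (X : Set ℕ) : ℝ≥0∞ := ∑' i : X, μ i

lemma mass_mono (μ : ℕ → ℝ≥0∞) {X Y : Set ℕ} (h : X ⊆ Y) : mass μ X ≤ mass μ Y := by
  classical
  rw [mass, mass, tsum_subtype, tsum_subtype]
  exact ENNReal.tsum_le_tsum fun i =>
    Set.indicator_le_indicator_of_subset h (fun _ => zero_le) i

lemma mass_coe (μ : ℕ → ℝ≥0∞) (s : Finset ℕ) : mass μ (↑s : Set ℕ) = ∑ j ∈ s, μ j :=
  Finset.tsum_subtype' s μ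

open Classical in
lemma extract (μ : ℕ → ℝ≥0∞) (hμ1 : ∀ i, μ i ≤ 1) (A : Set ℕ)
    (hA : mass μ A = ⊤) (N : ℕ) (c : ℝ≥0∞) (hc : c ≠ ⊤) :
    ∃ t : Finset ℕ, (↑t : Set ℕ) ⊆ A ∧ (∀ j ∈ t, N ≤ j) ∧
      c ≤ ∑ j ∈ t, μ j ∧ ∑ j ∈ t, μ j < c + 1 := by
  set P : ℕ → Prop := fun j => j ∈ A ∧ N ≤ j with hP
  set S : ℕ → ℝ≥0∞ := fun n => ∑ j ∈ (Finset.range n).filter P, μ j with hS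
  have h3 : ∑ j ∈ Finset.range N, μ j ≤ (N : ℝ≥0∞) := by
    calc ∑ j ∈ Finset.range N, μ j ≤ ∑ _j ∈ Finset.range N, (1 : ℝ≥0∞) :=
          Finset.sum_le_sum fun j _ => hμ1 j
      _ = N := by simp
  have hreach : ∃ n, c ≤ S n := by
    have hind : (⨆ n, ∑ j ∈ Finset.range n, A.indicator μ j) = ⊤ := by
      rw [← ENNReal.tsum_eq_iSup_nat, ← tsum_subtype]; exact hA
    have hfin : c + (N : ℝ≥0∞) < ⊤ := by
      rw [lt_top_iff_ne_top]
      simp [ENNReal.add_eq_top, hc]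
    rw [← hind] at hfin
    obtain ⟨n, hn⟩ := lt_iSup_iff.mp hfin
    refine ⟨n, ?_⟩
    have hbound : ∑ j ∈ Finset.range n, A.indicator μ j ≤ S n + N := by
      have h1 : ∑ j ∈ Finset.range n, A.indicator μ j
          = ∑ j ∈ (Finset.range n).filter (· ∈ A), μ j := by
        rw [Finset.sum_filter]
        exact Finset.sum_congr rfl fun j _ => by simp [Set.indicator_apply]
      have hsplit := Finset.sum_filter_add_sum_filter_not
        ((Finset.range n).filter (· ∈ A)) (fun j => N ≤ j) μ
      have hfirst : ((Finset.range n).filter (· ∈ A)).filter (fun j => N ≤ j)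
          = (Finset.range n).filter P := by
        rw [Finset.filter_filter]
      have hsecond : ∑ j ∈ ((Finset.range n).filter (· ∈ A)).filter
          (fun j => ¬ N ≤ j), μ j ≤ (N : ℝ≥0∞) := by
        refine le_trans (Finset.sum_le_sum_of_subset ?_) h3
        intro j hj
        simp only [Finset.mem_filter, Finset.mem_range, not_le] at hj
        exact Finset.mem_range.2 hj.2
      calc ∑ j ∈ Finset.range n, A.indicator μ j
          = ∑ j ∈ (Finset.range n).filter (· ∈ A), μ j := h1
        _ = ∑ j ∈ ((Finset.range n).filter (· ∈ A)).filter (fun j => N ≤ j), μ j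
            + ∑ j ∈ ((Finset.range n).filter (· ∈ A)).filter (fun j => ¬ N ≤ j), μ j :=
            hsplit.symm
        _ ≤ S n + N := add_le_add (le_of_eq (by rw [hfirst])) hsecond
    have := hn.trans_le hbound
    exact le_of_lt ((ENNReal.add_lt_add_iff_right (by simp)).mp this)
  obtain ⟨n, hcn, hmin⟩ : ∃ n, c ≤ S n ∧ ∀ k < n, ¬ c ≤ S k :=
    ⟨Nat.find hreach, Nat.find_spec hreach, fun k hk => Nat.find_min hreach hk⟩
  refine ⟨(Finset.range n).filter P, ?_, ?_, hcn, ?_⟩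
  · intro j hj
    simp only [Finset.coe_filter, Set.mem_setOf_eq, hP] at hj
    exact hj.2.1
  · intro j hj
    exact (Finset.mem_filter.mp hj).2.2
  · show S n < c + 1
    cases n with
    | zero =>
      have h0 : S 0 = 0 := by simp [hS]
      rw [h0]
      exact lt_of_lt_of_le zero_lt_one le_add_self
    | succ k =>
      have hk : ¬ c ≤ S k := hmin k (Nat.lt_succ_self k)
      push_neg at hk
      have hstep : S (k + 1) ≤ S k + μ k := by
        have hsub : (Finset.range (k+1)).filter P ⊆ insert k ((Finset.range k).filter P) := by
          intro j hj
          simp only [Finset.mem_filter, Finset.mem_range] at hj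
          rcases Nat.lt_succ_iff_lt_or_eq.mp hj.1 with h | h
          · exact Finset.mem_insert_of_mem (Finset.mem_filter.2 ⟨Finset.mem_range.2 h, hj.2⟩)
          · exact h ▸ Finset.mem_insert_self _ _
        calc S (k+1) ≤ ∑ j ∈ insert k ((Finset.range k).filter P), μ j :=
              Finset.sum_le_sum_of_subset hsub
          _ = μ k + S k := Finset.sum_insert (by simp)
          _ = S k + μ k := add_comm _ _
      calc S (k+1) ≤ S k + μ k := hstep
        _ ≤ S k + 1 := add_le_add_right (hμ1 k) _
        _ < c + 1 := ENNReal.add_lt_add_right ENNReal.one_ne_top hk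

/-- Key combinatorial step for summable ideals: from an `I`-positive set `A`
one can extract consecutive finite blocks `tᵢ ⊆ A \ f(i)` of mass between
`2^i` and `2^{i+1} + 1`, whose union `B` is again `I`-positive. -/
theorem stmt7 (μ : ℕ → ℝ≥0∞) (hμ1 : ∀ i, μ i ≤ 1)
    (hμdiv : mass μ Set.univ = ⊤) (f : ℕ → ℕ)
    (A : Set ℕ) (hA : mass μ A = ⊤) (m : ℕ) :
    ∃ t : ℕ → Finset ℕ,
      (∀ i, m < i → (↑(t i) : Set ℕ) ⊆ A ∧ (∀ j ∈ t i, f i ≤ j) ∧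
        (2 : ℝ≥0∞) ^ i ≤ ∑ j ∈ t i, μ j ∧ ∑ j ∈ t i, μ j < 2 ^ (i + 1) + 1) ∧
      (∀ i, m < i → ∀ j ∈ t i, ∀ k ∈ t (i + 1), j < k) ∧
      mass μ (⋃ i ∈ {i : ℕ | m < i}, (↑(t i) : Set ℕ)) = ⊤ := by
  have key : ∀ N i, ∃ t : Finset ℕ, (↑t : Set ℕ) ⊆ A ∧ (∀ j ∈ t, N ≤ j) ∧
      (2 : ℝ≥0∞) ^ i ≤ ∑ j ∈ t, μ j ∧ ∑ j ∈ t, μ j < 2 ^ i + 1 := fun N i =>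
    extract μ hμ1 A hA N (2 ^ i) (by simp)
  choose T hT1 hT2 hT3 hT4 using key
  set t : ℕ → Finset ℕ := fun i =>
    Nat.rec (T (f 0) 0) (fun i prev => T (max (f (i+1)) (prev.sup id + 1)) (i+1)) i with ht
  have hsubA : ∀ i, (↑(t i) : Set ℕ) ⊆ A := by
    intro i; cases i with
    | zero => exact hT1 _ _
    | succ k => exact hT1 _ _
  have hflb : ∀ i, ∀ j ∈ t i, f i ≤ j := by
    intro i; cases i with
    | zero => exact hT2 _ _
    | succ k => exact fun j hj => le_trans (le_max_left _ _) (hT2 _ _ j hj)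
  have hlow : ∀ i, (2 : ℝ≥0∞) ^ i ≤ ∑ j ∈ t i, μ j := by
    intro i; cases i with
    | zero => exact hT3 _ _
    | succ k => exact hT3 _ _
  have hupp : ∀ i, ∑ j ∈ t i, μ j < 2 ^ (i + 1) + 1 := by
    intro i
    have h1 : ∑ j ∈ t i, μ j < 2 ^ i + 1 := by
      cases i with
      | zero => exact hT4 _ _
      | succ k => exact hT4 _ _
    refine h1.trans_le (add_le_add_left ?_ 1)
    calc (2 : ℝ≥0∞) ^ i = 2 ^ i * 1 := (mul_one _).symm
      _ ≤ 2 ^ i * 2 := mul_le_mul_right one_le_two _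
      _ = 2 ^ (i + 1) := (pow_succ 2 i).symm
  have hsep : ∀ i, ∀ j ∈ t i, ∀ k ∈ t (i + 1), j < k := by
    intro i j hj k hk
    have h1 : max (f (i+1)) ((t i).sup id + 1) ≤ k := hT2 _ _ k hk
    have h2 : j ≤ (t i).sup id := Finset.le_sup (f := id) hj
    have h3 : (t i).sup id + 1 ≤ k := le_trans (le_max_right _ _) h1
    omega
  refine ⟨t, fun i _ => ⟨hsubA i, hflb i, hlow i, hupp i⟩, fun i _ => hsep i, ?_⟩
  set B := ⋃ i ∈ {i : ℕ | m < i}, (↑(t i) : Set ℕ) with hB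
  have hle : ∀ n : ℕ, (2 : ℝ≥0∞) ^ n ≤ mass μ B := by
    intro n
    have hi : m < max n (m + 1) := lt_of_lt_of_le (Nat.lt_succ_self m) (le_max_right _ _)
    have hsub : (↑(t (max n (m + 1))) : Set ℕ) ⊆ B := by
      intro x hx
      exact Set.mem_biUnion hi hx
    calc (2 : ℝ≥0∞) ^ n ≤ 2 ^ (max n (m + 1)) :=
          pow_le_pow_right₀ one_le_two (le_max_left _ _)
      _ ≤ ∑ j ∈ t (max n (m + 1)), μ j := hlow _
      _ = mass μ (↑(t (max n (m + 1))) : Set ℕ) := (mass_coe μ _).symm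
      _ ≤ mass μ B := mass_mono μ hsub
  by_contra hne
  obtain ⟨n, hn⟩ := ENNReal.exists_nat_gt hne
  have h1 : (n : ℝ≥0∞) ≤ 2 ^ n := by
    have := Nat.lt_two_pow_self (n := n)
    calc (n : ℝ≥0∞) ≤ ((2 ^ n : ℕ) : ℝ≥0∞) := Nat.cast_le.2 this.le
      _ = 2 ^ n := by push_cast; ring
  exact absurd (hle n) (not_le.2 (lt_of_lt_of_le hn h1))
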